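/- Fix d ∈ ℚ, d ≠ 0. For each g ≥ 1 let D₁^g ∈ ℚ and define the doubly-indexed sequence D_i^g for i ≥ 0, g ≥ 0 by D₀^0 = 1/d, D₀^g = 0 for g ≥ 1, D_i^0 = 0 for i ≥ 1, and the recursion D_i^g = −d ∑_{g₁+g₂=g} C(2g−1, 2g₁−1) ∑_{k=1}^{i} (−1)^k D_{i−k}^{g₁} D_k^{g₂} for i ≥ 2 (where g₁, g₂ range over nonnegative integers summing to g, and C(2g−1,−1) := 0). Then defining generating functions 𝒟_i(u) = ∑_{g≥i} D_i^g u^{2g}/(2g)!, one has 𝒟_i = (d^{i−1}/i!) 𝒟₁^i for all i ≥ 1. -/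

import Mathlib

open PowerSeries
open Finset


section aux
variable (D : ℕ → ℕ → ℚ)

noncomputable def Faux (j : ℕ) : ℚ⟦X⟧ :=
  PowerSeries.mk fun n => if n % 2 = 0 then D j (n / 2) / (Nat.factorial n : ℚ) else 0

lemma coeff_Faux (j n : ℕ) :
    coeff n (Faux D j) = if n % 2 = 0 then D j (n / 2) / (Nat.factorial n : ℚ) else 0 :=
  coeff_mk _ _

lemma aux_sum_range_two_mul (g : ℕ) (h : ℕ → ℚ) :
    ∑ p ∈ Finset.range (2*g), h p = ∑ m ∈ Finset.range g, (h (2*m) + h (2*m+1)) := by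
  induction g with
  | zero => simp
  | succ g ih =>
      have : 2 * (g+1) = (2*g)+1+1 := by ring
      rw [this, Finset.sum_range_succ, Finset.sum_range_succ, ih, Finset.sum_range_succ,
        add_assoc]

lemma coeff_prod_even (j k n : ℕ) (hn : n % 2 = 0) :
    coeff n (d⁄dX ℚ (Faux D j) * Faux D k) = 0 := by
  rw [coeff_mul]
  refine Finset.sum_eq_zero fun p hp => ?_
  rw [Finset.HasAntidiagonal.mem_antidiagonal] at hp
  rw [coeff_derivative, coeff_Faux, coeff_Faux]
  by_cases h1 : (p.1 + 1) % 2 = 0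
  · by_cases h2 : p.2 % 2 = 0
    · omega
    · rw [if_neg h2, mul_zero]
  · rw [if_neg h1, zero_mul, zero_mul]

lemma coeff_prod_odd (j k g : ℕ) (hg : 1 ≤ g) :
    coeff (2*g-1) (d⁄dX ℚ (Faux D j) * Faux D k)
      = ∑ g₁ ∈ Finset.range (g+1),
          (if g₁ = 0 then 0 else ((2*g-1).choose (2*g₁-1) : ℚ)) *
            (D j g₁ * D k (g - g₁)) / (Nat.factorial (2*g-1) : ℚ) := by
  obtain ⟨g', rfl⟩ : ∃ g', g = g' + 1 := ⟨g - 1, by omega⟩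
  rw [coeff_mul, Finset.Nat.sum_antidiagonal_eq_sum_range_succ_mk]
  have h1 : 2 * (g'+1) - 1 + 1 = 2 * (g'+1) := by omega
  rw [Nat.succ_eq_add_one, h1]
  rw [aux_sum_range_two_mul]
  rw [Finset.sum_range_succ' (fun g₁ => (if g₁ = 0 then 0 else ((2*(g'+1)-1).choose (2*g₁-1) : ℚ)) * (D j g₁ * D k (g'+1 - g₁)) / (Nat.factorial (2*(g'+1)-1) : ℚ)) (g'+1)]
  simp only [if_pos rfl, if_true, zero_mul, zero_div, add_zero]
  refine Finset.sum_congr rfl fun m hm => ?_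
  rw [Finset.mem_range] at hm
  have hodd : (2*m+1) % 2 ≠ 0 := by omega
  have heven : (2*m+1+1) % 2 = 0 := by omega
  have hi2 : 2 * (g'+1) - 1 - (2*m+1) = 2 * (g' - m) := by omega
  have hi2e : (2 * (g' - m)) % 2 = 0 := by omega
  rw [coeff_derivative, coeff_derivative, coeff_Faux, coeff_Faux, coeff_Faux, coeff_Faux,
    if_neg hodd, zero_mul, zero_mul, zero_add, if_pos heven, hi2, if_pos hi2e]
  have e1 : (2*m+1+1)/2 = m + 1 := by omega
  have e2 : 2 * (g' - m) / 2 = g' + 1 - (m + 1) := by omega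
  rw [e1, e2, if_neg (Nat.succ_ne_zero m)]
  have hle : 2*(m+1)-1 ≤ 2*(g'+1)-1 := by omega
  have e3 : 2*(m+1)-1 = 2*m+1 := by omega
  rw [e3] at hle
  rw [e3, Nat.cast_choose ℚ hle]
  have e4 : 2*(g'+1)-1 - (2*m+1) = 2*(g'-m) := by omega
  rw [e4]
  have f1 : (Nat.factorial (2*m+1+1) : ℚ) = (2*m+1+1) * Nat.factorial (2*m+1) := by
    exact_mod_cast congrArg (Nat.cast : ℕ → ℚ) (Nat.factorial_succ (2*m+1))
  have hne1 : (Nat.factorial (2*m+1) : ℚ) ≠ 0 := Nat.cast_ne_zero.mpr (Nat.factorial_ne_zero _)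
  have hne2 : (Nat.factorial (2*(g'-m)) : ℚ) ≠ 0 := Nat.cast_ne_zero.mpr (Nat.factorial_ne_zero _)
  have hne3 : (Nat.factorial (2*(g'+1)-1) : ℚ) ≠ 0 := Nat.cast_ne_zero.mpr (Nat.factorial_ne_zero _)
  have hne4 : ((2*m+1+1 : ℕ) : ℚ) ≠ 0 := by positivity
  rw [f1]
  field_simp
  push_cast
  ring


lemma deriv_Faux_rec (d : ℚ)
    (hrec : ∀ i g, 2 ≤ i → 1 ≤ g →
      D i g = -d * ∑ g₁ ∈ Finset.range (g + 1),
        (if g₁ = 0 then 0 else ((2 * g - 1).choose (2 * g₁ - 1) : ℚ)) *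
          ∑ k ∈ Finset.Icc 1 i, (-1 : ℚ) ^ k * D (i - k) g₁ * D k (g - g₁))
    (i : ℕ) (h2 : 2 ≤ i) :
    d⁄dX ℚ (Faux D i)
      = (-d) • ∑ k ∈ Finset.Icc 1 i, ((-1:ℚ))^k • (d⁄dX ℚ (Faux D (i-k)) * Faux D k) := by
  ext n
  simp only [map_smul, map_sum, smul_eq_mul]
  rw [coeff_derivative, coeff_Faux]
  by_cases hn : (n+1) % 2 = 0
  · obtain ⟨g, hg1, rfl⟩ : ∃ g, 1 ≤ g ∧ n = 2*g-1 := ⟨(n+1)/2, by omega, by omega⟩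
    have hdiv : (2*g-1+1)/2 = g := by omega
    have hfacne : ((2*g-1).factorial : ℚ) ≠ 0 := Nat.cast_ne_zero.mpr (Nat.factorial_ne_zero _)
    rw [if_pos hn, hdiv]
    have hL : D i g / (((2*g-1+1).factorial : ℕ) : ℚ) * (((2*g-1 : ℕ) : ℚ) + 1)
        = D i g / (((2*g-1).factorial : ℕ) : ℚ) := by
      rw [Nat.factorial_succ]
      push_cast
      have hne : ((2*g-1 : ℕ) : ℚ) + 1 ≠ 0 := by positivity
      field_simp
    rw [hL, hrec i g h2 hg1]
    calc (-d * ∑ g₁ ∈ Finset.range (g+1),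
            (if g₁ = 0 then 0 else ((2 * g - 1).choose (2 * g₁ - 1) : ℚ)) *
              ∑ k ∈ Finset.Icc 1 i, (-1 : ℚ) ^ k * D (i - k) g₁ * D k (g - g₁))
            / (2*g-1).factorial
        = ∑ g₁ ∈ Finset.range (g+1), ∑ k ∈ Finset.Icc 1 i,
            -d * ((-1:ℚ)^k *
              ((if g₁ = 0 then 0 else ((2 * g - 1).choose (2 * g₁ - 1) : ℚ)) *
                (D (i - k) g₁ * D k (g - g₁)) / (2*g-1).factorial)) := by
          rw [Finset.mul_sum, Finset.sum_div]
          refine Finset.sum_congr rfl fun g₁ _ => ?_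
          rw [Finset.mul_sum, Finset.mul_sum, Finset.sum_div]
          refine Finset.sum_congr rfl fun k _ => ?_
          ring
      _ = ∑ k ∈ Finset.Icc 1 i, -d * ((-1:ℚ)^k *
            (coeff (2*g-1)) (d⁄dX ℚ (Faux D (i-k)) * Faux D k)) := by
          rw [Finset.sum_comm]
          refine Finset.sum_congr rfl fun k _ => ?_
          rw [coeff_prod_odd D (i-k) k g hg1, Finset.mul_sum, Finset.mul_sum]
      _ = -d * ∑ k ∈ Finset.Icc 1 i, (-1:ℚ)^k *
            (coeff (2*g-1)) (d⁄dX ℚ (Faux D (i-k)) * Faux D k) := by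
          rw [Finset.mul_sum]
  · have hn0 : n % 2 = 0 := by omega
    rw [if_neg hn, zero_mul]
    have : ∑ k ∈ Finset.Icc 1 i, ((-1:ℚ))^k * (coeff n) (d⁄dX ℚ (Faux D (i-k)) * Faux D k) = 0 :=
      Finset.sum_eq_zero fun k _ => by rw [coeff_prod_even D (i-k) k n hn0, mul_zero]
    rw [this, mul_zero]

lemma Faux_zero (d : ℚ) (h00 : D 0 0 = 1 / d) (h0g : ∀ g, 1 ≤ g → D 0 g = 0) :
    Faux D 0 = C (1/d) := by
  ext n
  rw [coeff_Faux, coeff_C]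
  rcases Nat.eq_zero_or_pos n with rfl | hn
  · simp [h00]
  · rw [if_neg (show ¬ n = 0 by omega)]
    by_cases hp : n % 2 = 0
    · rw [if_pos hp, h0g (n/2) (by omega), zero_div]
    · rw [if_neg hp]


end aux

lemma alt_sum_Icc (i' : ℕ) (h : 1 ≤ i') :
    ∑ k ∈ Finset.Icc 1 i', ((-1:ℚ))^k * (i'.choose k : ℚ) = -1 := by
  have h0 : ∑ k ∈ Finset.range (i'+1), ((-1:ℚ))^k * (i'.choose k : ℚ) = 0 := by
    have := Int.alternating_sum_range_choose_of_ne (show i' ≠ 0 by omega)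
    have := congrArg (fun z : ℤ => (z : ℚ)) this
    push_cast at this
    simpa using this
  rw [Finset.range_eq_Ico, Finset.sum_eq_sum_Ico_succ_bot (by omega)] at h0
  rw [← Finset.Ico_add_one_right_eq_Icc]
  simp only [pow_zero, Nat.choose_zero_right, Nat.cast_one, one_mul, zero_add] at h0
  linarith

lemma scalar_id (d : ℚ) (i' : ℕ) (h : 1 ≤ i') :
    -d * ∑ k ∈ Finset.Icc 1 i',
        ((-1:ℚ))^k * (d^(i'+1-k-1)/(((i'+1-k).factorial : ℕ) : ℚ) * (((i'+1-k : ℕ)) : ℚ)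
          * (d^(k-1)/((k.factorial : ℕ) : ℚ)))
      = d^(i'+1-1)/(((i'+1).factorial : ℕ) : ℚ) * (((i'+1 : ℕ)) : ℚ) := by
  have h1 : ∑ k ∈ Finset.Icc 1 i',
        ((-1:ℚ))^k * (d^(i'+1-k-1)/(((i'+1-k).factorial : ℕ) : ℚ) * (((i'+1-k : ℕ)) : ℚ)
          * (d^(k-1)/((k.factorial : ℕ) : ℚ)))
      = (d^(i'-1)/((i'.factorial : ℕ) : ℚ)) *
          ∑ k ∈ Finset.Icc 1 i', ((-1:ℚ))^k * (i'.choose k : ℚ) := by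
    rw [Finset.mul_sum]
    refine Finset.sum_congr rfl fun k hk => ?_
    rw [Finset.mem_Icc] at hk
    obtain ⟨m, rfl⟩ := Nat.exists_eq_add_of_le hk.2
    simp only [show k+m+1-k-1 = m from by omega, show k+m+1-k = m+1 from by omega]
    rw [Nat.cast_choose ℚ (by omega : k ≤ k+m)]
    have hd' : d^(k+m-1) = d^m * d^(k-1) := by rw [← pow_add]; congr 1; omega
    rw [hd', Nat.factorial_succ]
    have n1 : ((m.factorial : ℕ) : ℚ) ≠ 0 := Nat.cast_ne_zero.mpr (Nat.factorial_ne_zero _)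
    have n2 : ((k.factorial : ℕ) : ℚ) ≠ 0 := Nat.cast_ne_zero.mpr (Nat.factorial_ne_zero _)
    have n3 : (((k+m).factorial : ℕ) : ℚ) ≠ 0 := Nat.cast_ne_zero.mpr (Nat.factorial_ne_zero _)
    have n4 : ((m : ℚ) + 1) ≠ 0 := by positivity
    rw [show k+m-k = m from by omega]
    push_cast
    field_simp
  rw [h1, alt_sum_Icc i' h]
  have e1 : i'+1-1 = i' := by omega
  rw [e1, Nat.factorial_succ]
  have n1 : ((i'.factorial : ℕ) : ℚ) ≠ 0 := Nat.cast_ne_zero.mpr (Nat.factorial_ne_zero _)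
  have n4 : ((i' : ℚ) + 1) ≠ 0 := by positivity
  have hd' : d^(i') = d^(i'-1) * d := by rw [← pow_succ]; congr 1; omega
  rw [hd']
  push_cast
  field_simp



/-- Theorem 1 combined with the localization recursion: given arbitrary data
`D 1 g` (`g ≥ 1`) and the doubly-indexed sequence `D i g` determined by
`D 0 0 = 1/d`, `D 0 g = 0` for `g ≥ 1`, `D i 0 = 0` for `i ≥ 1`, and
`D i g = -d ∑_{g₁+g₂=g} C(2g-1, 2g₁-1) ∑_{k=1}^{i} (-1)^k D_{i-k}^{g₁} D_k^{g₂}`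
for `i ≥ 2` (with the convention `C(2g-1, -1) = 0` for `g₁ = 0`), the generating
functions `𝒟_i(u) = ∑_g D_i^g u^(2g)/(2g)!` satisfy
`𝒟_i = (d^(i-1)/i!) 𝒟₁^i` for all `i ≥ 1`. -/
theorem D_double_recursion_solution (d : ℚ) (hd : d ≠ 0)
    (D : ℕ → ℕ → ℚ)
    (h00 : D 0 0 = 1 / d)
    (h0g : ∀ g, 1 ≤ g → D 0 g = 0)
    (hi0 : ∀ i, 1 ≤ i → D i 0 = 0)
    (hrec : ∀ i g, 2 ≤ i → 1 ≤ g →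
      D i g = -d * ∑ g₁ ∈ Finset.range (g + 1),
        (if g₁ = 0 then 0 else ((2 * g - 1).choose (2 * g₁ - 1) : ℚ)) *
          ∑ k ∈ Finset.Icc 1 i, (-1 : ℚ) ^ k * D (i - k) g₁ * D k (g - g₁))
    (i : ℕ) (hi : 1 ≤ i) :
    (PowerSeries.mk fun n =>
        if n % 2 = 0 then D i (n / 2) / (Nat.factorial n : ℚ) else 0)
      = (d ^ (i - 1) / (Nat.factorial i : ℚ)) •
        (PowerSeries.mk fun n =>
          if n % 2 = 0 then D 1 (n / 2) / (Nat.factorial n : ℚ) else 0) ^ i := by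
  
  have key : ∀ i, 1 ≤ i →
      Faux D i = (d ^ (i - 1) / ((i.factorial : ℕ) : ℚ)) • (Faux D 1) ^ i := by
    intro i
    induction i using Nat.strong_induction_on with
    | _ i IH =>
      intro hi
      rcases eq_or_lt_of_le hi with h1 | h2
      · rw [← h1]
        norm_num
      · obtain ⟨i', rfl⟩ : ∃ i', i = i' + 1 := ⟨i - 1, by omega⟩
        have hi' : 1 ≤ i' := by omega
        have h2' : 2 ≤ i' + 1 := by omega
        apply PowerSeries.derivative.ext
        · rw [deriv_Faux_rec D d hrec (i'+1) h2']
          rw [Finset.sum_Icc_succ_top (by omega : 1 ≤ i' + 1)]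
          rw [show i' + 1 - (i' + 1) = 0 from by omega, Faux_zero D d h00 h0g,
            derivative_C, zero_mul, smul_zero, add_zero]
          have hterm : ∀ k ∈ Finset.Icc 1 i',
              ((-1:ℚ))^k • (d⁄dX ℚ (Faux D (i'+1-k)) * Faux D k)
                = ((-1:ℚ)^k * (d^(i'+1-k-1)/(((i'+1-k).factorial : ℕ) : ℚ)
                    * (((i'+1-k : ℕ)) : ℚ) * (d^(k-1)/((k.factorial : ℕ) : ℚ)))) •
                  (Faux D 1 ^ i' * d⁄dX ℚ (Faux D 1)) := by
            intro k hk
            rw [Finset.mem_Icc] at hk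
            have hik1 : 1 ≤ i' + 1 - k := by omega
            have hik2 : i' + 1 - k < i' + 1 := by omega
            rw [IH (i'+1-k) hik2 hik1, IH k (by omega) hk.1]
            rw [(d⁄dX ℚ).map_smul, Derivation.leibniz_pow, smul_eq_mul,
              ← Nat.cast_smul_eq_nsmul ℚ]
            rw [smul_smul, smul_mul_assoc, mul_smul_comm, smul_smul, smul_smul]
            have hser : Faux D 1 ^ (i'+1-k-1) * d⁄dX ℚ (Faux D 1) * Faux D 1 ^ k
                = Faux D 1 ^ i' * d⁄dX ℚ (Faux D 1) := by
              rw [mul_right_comm, ← pow_add, show i'+1-k-1+k = i' from by omega]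
            rw [hser]
            congr 1
            ring
          rw [Finset.sum_congr rfl hterm, ← Finset.sum_smul, smul_smul]
          rw [(d⁄dX ℚ).map_smul, Derivation.leibniz_pow, smul_eq_mul,
            ← Nat.cast_smul_eq_nsmul ℚ, smul_smul, show i' + 1 - 1 = i' from by omega]
          congr 1
          have := scalar_id d i' hi'
          rw [show i' + 1 - 1 = i' from by omega] at this
          rw [← this]
        · rw [smul_eq_C_mul, map_mul, map_pow, constantCoeff_C]
          have hc1 : constantCoeff (Faux D 1) = 0 := by
            rw [← coeff_zero_eq_constantCoeff, coeff_Faux]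
            simp [hi0 1 le_rfl]
          have hci : constantCoeff (Faux D (i'+1)) = 0 := by
            rw [← coeff_zero_eq_constantCoeff, coeff_Faux]
            simp [hi0 (i'+1) (by omega)]
          rw [hc1, hci, zero_pow (by omega : i' + 1 ≠ 0), mul_zero]
  exact key i hi
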